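/- Let p ≥ 5 be a prime, Π a finite projective plane of order p², and c a code word of C(Π)^⊥ of weight w(c) = 2p² − 2p + 4 (i.e., ε = 2 in w(c) = 2p² − 2p + 2 + ε). Then there is at most one colour μ ∈ {1, ..., p−1} such that |K_μ| = 2p − 1. -/

import Mathlib

open Finset
open scoped Classical
set_option linter.unusedSectionVars false
set_option maxHeartbeats 1000000

/-- A projective plane of order `n`, given by an abstract incidence relation `R`. -/
structure IsProjectivePlaneOrder {P L : Type*} (n : ℕ) (R : P → L → Prop) : Prop where
  existsUnique_line : ∀ x y : P, x ≠ y → ∃! l : L, R x l ∧ R y l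
  existsUnique_point : ∀ l m : L, l ≠ m → ∃! x : P, R x l ∧ R x m
  quadrangle : ∃ a b c d : P, a ≠ b ∧ a ≠ c ∧ a ≠ d ∧ b ≠ c ∧ b ≠ d ∧ c ≠ d ∧
    ∀ l : L, ¬(R a l ∧ R b l ∧ R c l) ∧ ¬(R a l ∧ R b l ∧ R d l) ∧
      ¬(R a l ∧ R c l ∧ R d l) ∧ ¬(R b l ∧ R c l ∧ R d l)
  line_card : ∀ l : L, {x | R x l}.ncard = n + 1
  point_card : ∀ x : P, {l | R x l}.ncard = n + 1

/-- A code word of the dual code `C(Π)^⊥`: a function from points to `F_p` summing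
to zero on every line. -/
def IsDualCodeWord {P L : Type*} (p : ℕ) (R : P → L → Prop) (c : P → ZMod p) : Prop :=
  ∀ l : L, ∑ᶠ x ∈ {y : P | R y l}, c x = 0

namespace AtMostOneAux

variable {Pt Ln : Type} [Fintype Pt] [Fintype Ln]

noncomputable def Sf {p : ℕ} (c : Pt → ZMod p) : Finset Pt := univ.filter (fun x => c x ≠ 0)

noncomputable def Kf {p : ℕ} (c : Pt → ZMod p) (a : ZMod p) : Finset Pt :=
  univ.filter (fun x => c x = a)

noncomputable def Tl {p : ℕ} (R : Pt → Ln → Prop) (c : Pt → ZMod p) (l : Ln) : Finset Pt :=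
  univ.filter (fun x => R x l ∧ c x ≠ 0)

noncomputable def lns (R : Pt → Ln → Prop) (P : Pt) : Finset Ln := univ.filter (fun l => R P l)

section Basic

variable {p : ℕ} {R : Pt → Ln → Prop} {c : Pt → ZMod p}

lemma mem_Sf {x : Pt} : x ∈ Sf c ↔ c x ≠ 0 := by simp [Sf]
lemma mem_Kf {x : Pt} {a : ZMod p} : x ∈ Kf c a ↔ c x = a := by simp [Kf]
lemma mem_Tl {x : Pt} {l : Ln} : x ∈ Tl R c l ↔ R x l ∧ c x ≠ 0 := by simp [Tl]
lemma mem_lns {P : Pt} {l : Ln} : l ∈ lns R P ↔ R P l := by simp [lns]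

variable {n : ℕ} (hPP : IsProjectivePlaneOrder n R)
include hPP

lemma lns_card (P : Pt) : (lns R P).card = n + 1 := by
  have h := hPP.point_card P
  rwa [Set.ncard_eq_toFinset_card', Set.toFinset_setOf] at h

lemma nonempty_Ln : Nonempty Ln := by
  obtain ⟨a, b, -, -, hab, -⟩ := hPP.quadrangle
  exact ⟨(hPP.existsUnique_line a b hab).exists.choose⟩

noncomputable def lineOf {x y : Pt} (h : x ≠ y) : Ln :=
  (hPP.existsUnique_line x y h).exists.choose

lemma lineOf_spec {x y : Pt} (h : x ≠ y) : R x (lineOf hPP h) ∧ R y (lineOf hPP h) :=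
  (hPP.existsUnique_line x y h).exists.choose_spec

lemma line_unique {x y : Pt} (h : x ≠ y) {l m : Ln} (hl : R x l ∧ R y l)
    (hm : R x m ∧ R y m) : l = m := by
  obtain ⟨u, -, hu⟩ := hPP.existsUnique_line x y h
  rw [hu l hl, hu m hm]

omit hPP in
lemma line_sum (hc : IsDualCodeWord p R c) (l : Ln) : ∑ x ∈ Tl R c l, c x = 0 := by
  have h := hc l
  rw [show {y : Pt | R y l} = ((univ.filter (fun y => R y l) : Finset Pt) : Set Pt) by
    ext; simp] at h
  rw [finsum_mem_coe_finset] at h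
  rw [← Finset.sum_filter_ne_zero] at h
  rw [Finset.filter_filter] at h
  exact h

end Basic

section Fiber

variable {p : ℕ} {R : Pt → Ln → Prop} {c : Pt → ZMod p}
variable (hPP : IsProjectivePlaneOrder (p ^ 2) R) (hc : IsDualCodeWord p R c)
include hPP hc

omit hc in
lemma P_mem_Tl {P : Pt} (hP : c P ≠ 0) {l : Ln} (hl : l ∈ lns R P) : P ∈ Tl R c l :=
  mem_Tl.mpr ⟨mem_lns.mp hl, hP⟩

/-- the lines through `P` partition the rest of the support -/
lemma sum_fib {P : Pt} (hP : c P ≠ 0) :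
    (∑ l ∈ lns R P, ((Tl R c l).erase P).card) + 1 = (Sf c).card := by
  have hNe : Nonempty Ln := nonempty_Ln hPP
  set φ : Pt → Ln := fun Q => if h : Q = P then Classical.arbitrary Ln
    else lineOf hPP (Ne.symm h) with hφ
  have hmapsto : ∀ Q ∈ (Sf c).erase P, φ Q ∈ lns R P := by
    intro Q hQ
    have hQP : Q ≠ P := (Finset.mem_erase.mp hQ).1
    rw [hφ]; simp only [dif_neg hQP]
    exact mem_lns.mpr (lineOf_spec hPP (Ne.symm hQP)).1
  have hcount := Finset.card_eq_sum_card_fiberwise hmapsto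
  have hfib : ∀ l ∈ lns R P, ((Sf c).erase P).filter (fun Q => φ Q = l)
      = (Tl R c l).erase P := by
    intro l hl
    have hRP : R P l := mem_lns.mp hl
    ext Q
    simp only [Finset.mem_filter, Finset.mem_erase, mem_Sf, mem_Tl]
    constructor
    · rintro ⟨⟨hQP, hQ0⟩, hQl⟩
      refine ⟨hQP, ?_, hQ0⟩
      rw [hφ] at hQl; simp only [dif_neg hQP] at hQl
      rw [← hQl]; exact (lineOf_spec hPP (Ne.symm hQP)).2
    · rintro ⟨hQP, hQl, hQ0⟩
      refine ⟨⟨hQP, hQ0⟩, ?_⟩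
      rw [hφ]; simp only [dif_neg hQP]
      exact line_unique hPP (Ne.symm hQP) (lineOf_spec hPP (Ne.symm hQP)) ⟨hRP, hQl⟩
  have hc2 : ∑ l ∈ lns R P, (((Sf c).erase P).filter (fun Q => φ Q = l)).card
      = ∑ l ∈ lns R P, ((Tl R c l).erase P).card :=
    Finset.sum_congr rfl (fun l hl => by rw [hfib l hl])
  rw [hc2] at hcount
  rw [← hcount]
  exact Finset.card_erase_add_one (mem_Sf.mpr hP)

lemma fib_nonempty {P : Pt} (hP : c P ≠ 0) {l : Ln} (hl : l ∈ lns R P) :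
    ((Tl R c l).erase P).Nonempty := by
  by_contra h
  rw [Finset.not_nonempty_iff_eq_empty, Finset.erase_eq_empty_iff] at h
  have hPl : P ∈ Tl R c l := P_mem_Tl hPP hP hl
  have hT : Tl R c l = {P} := by
    rcases h with h | h
    · rw [h] at hPl; exact absurd hPl (Finset.notMem_empty P)
    · exact h
  have hs := line_sum hc l
  rw [hT, Finset.sum_singleton] at hs
  exact hP hs

/-- counting 2-secants through a support point: injection into `K_{-c P}` -/
lemma t1_le {P : Pt} (hP : c P ≠ 0) :
    ((lns R P).filter (fun l => ((Tl R c l).erase P).card = 1)).card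
      ≤ (Kf c (-(c P))).card := by
  apply Finset.card_le_card_of_injOn
    (fun l => if h : ((Tl R c l).erase P).Nonempty then h.choose else P)
  · intro l hl
    simp only [Finset.mem_coe, Finset.mem_filter] at hl
    obtain ⟨hl1, hl2⟩ := hl
    have hne : ((Tl R c l).erase P).Nonempty := Finset.card_pos.mp (by omega)
    simp only [dif_pos hne]
    have hmem := hne.choose_spec
    have hsingle : (Tl R c l).erase P = {hne.choose} := by
      obtain ⟨y, hy⟩ := Finset.card_eq_one.mp hl2
      have h2 : hne.choose = y := Finset.mem_singleton.mp (by rw [← hy]; exact hmem)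
      refine Finset.eq_singleton_iff_unique_mem.mpr ⟨hmem, fun x hx => ?_⟩
      have h1 : x = y := Finset.mem_singleton.mp (by rw [← hy]; exact hx)
      exact h1.trans h2.symm
    have hPl : P ∈ Tl R c l := P_mem_Tl hPP hP hl1
    have hT : Tl R c l = insert P ((Tl R c l).erase P) := (Finset.insert_erase hPl).symm
    have hs := line_sum hc l
    rw [hT, Finset.sum_insert (Finset.notMem_erase _ _), hsingle,
      Finset.sum_singleton] at hs
    rw [Finset.mem_coe, mem_Kf]
    exact eq_neg_of_add_eq_zero_right hs
  · intro l1 h1 l2 h2 heq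
    simp only [Finset.mem_coe, Finset.mem_filter] at h1 h2
    have hne1 : ((Tl R c l1).erase P).Nonempty := Finset.card_pos.mp (by omega)
    have hne2 : ((Tl R c l2).erase P).Nonempty := Finset.card_pos.mp (by omega)
    simp only [dif_pos hne1, dif_pos hne2] at heq
    have hx1 := hne1.choose_spec
    have hx2 := hne2.choose_spec
    rw [heq] at hx1
    set x := hne2.choose
    have hxP : x ≠ P := (Finset.mem_erase.mp hx2).1
    have hxl1 : R x l1 := (mem_Tl.mp (Finset.mem_erase.mp hx1).2).1
    have hxl2 : R x l2 := (mem_Tl.mp (Finset.mem_erase.mp hx2).2).1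
    exact line_unique hPP (Ne.symm hxP) ⟨mem_lns.mp h1.1, hxl1⟩ ⟨mem_lns.mp h2.1, hxl2⟩

lemma Sf_arith (hp5 : 5 ≤ p) (hw : (Function.support c).ncard = 2 * p ^ 2 - 2 * p + 4) :
    (Sf c).card + 2*p = 2*p^2 + 4 := by
  have h : Function.support c = {x : Pt | c x ≠ 0} := rfl
  rw [h, Set.ncard_eq_toFinset_card', Set.toFinset_setOf] at hw
  have hSf : (Sf c).card = 2*p^2 - 2*p + 4 := hw
  have h2 : 2*p ≤ p^2 := by
    rw [pow_two]
    exact Nat.mul_le_mul_right p (by omega)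
  obtain ⟨q, hq⟩ : ∃ q, q = p^2 := ⟨_, rfl⟩
  rw [← hq] at hSf h2 ⊢
  omega

lemma L1 (hS : (Sf c).card + 2*p = 2*p^2 + 4) {a : ZMod p} (ha : a ≠ 0)
    (hne : (Kf c a).Nonempty) : 2*p ≤ (Kf c (-a)).card + 1 := by
  obtain ⟨P, hPm⟩ := hne
  have hP : c P = a := mem_Kf.mp hPm
  have hP0 : c P ≠ 0 := by rw [hP]; exact ha
  have hsum := sum_fib hPP hc hP0
  have hN : (lns R P).card = p^2 + 1 := lns_card hPP P
  set t1 := (lns R P).filter (fun l => ((Tl R c l).erase P).card = 1) with ht1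
  set t2 := (lns R P).filter (fun l => ¬ ((Tl R c l).erase P).card = 1) with ht2
  have hle : t1.card ≤ (Kf c (-a)).card := by
    have := t1_le hPP hc hP0
    rwa [hP] at this
  have hsplit : (∑ l ∈ t1, ((Tl R c l).erase P).card)
      + (∑ l ∈ t2, ((Tl R c l).erase P).card)
      = ∑ l ∈ lns R P, ((Tl R c l).erase P).card :=
    Finset.sum_filter_add_sum_filter_not (lns R P)
    (fun l => ((Tl R c l).erase P).card = 1) (fun l => ((Tl R c l).erase P).card)
  have hb1 : ∑ l ∈ t1, ((Tl R c l).erase P).card = t1.card := by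
    rw [Finset.card_eq_sum_ones]
    exact Finset.sum_congr rfl (fun l hl => (Finset.mem_filter.mp hl).2)
  have hcc : t1.card + t2.card = (lns R P).card :=
    Finset.card_filter_add_card_filter_not _
  have hb2 : t2.card * 2 ≤ ∑ l ∈ t2, ((Tl R c l).erase P).card := by
    have h2 : ∀ l ∈ t2, 2 ≤ ((Tl R c l).erase P).card := by
      intro l hl
      rw [ht2, Finset.mem_filter] at hl
      have h1 := Finset.card_pos.mpr (fib_nonempty hPP hc hP0 hl.1)
      omega
    simpa [smul_eq_mul] using Finset.card_nsmul_le_sum t2 _ 2 h2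
  obtain ⟨q, hq⟩ : ∃ q, q = p^2 := ⟨_, rfl⟩
  rw [← hq] at hN hS
  omega

lemma fib_le_two (hS : (Sf c).card + 2*p = 2*p^2 + 4) {μ : ZMod p} (hμ : μ ≠ 0)
    (hKμ : (Kf c μ).card + 1 = 2*p) {P : Pt} (hP : c P = -μ) :
    ∀ l ∈ lns R P, ((Tl R c l).erase P).card ≤ 2 := by
  intro l0 hl0
  by_contra hgt
  push_neg at hgt
  have hP0 : c P ≠ 0 := by rw [hP]; exact neg_ne_zero.mpr hμ
  have hsum := sum_fib hPP hc hP0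
  have hN : (lns R P).card = p^2 + 1 := lns_card hPP P
  set t1 := (lns R P).filter (fun l => ((Tl R c l).erase P).card = 1) with ht1
  set t2 := (lns R P).filter (fun l => ¬ ((Tl R c l).erase P).card = 1) with ht2
  have hle : t1.card ≤ (Kf c μ).card := by
    have := t1_le hPP hc hP0
    rwa [hP, neg_neg] at this
  have hsplit : (∑ l ∈ t1, ((Tl R c l).erase P).card)
      + (∑ l ∈ t2, ((Tl R c l).erase P).card)
      = ∑ l ∈ lns R P, ((Tl R c l).erase P).card :=
    Finset.sum_filter_add_sum_filter_not (lns R P)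
    (fun l => ((Tl R c l).erase P).card = 1) (fun l => ((Tl R c l).erase P).card)
  have hb1 : ∑ l ∈ t1, ((Tl R c l).erase P).card = t1.card := by
    rw [Finset.card_eq_sum_ones]
    exact Finset.sum_congr rfl (fun l hl => (Finset.mem_filter.mp hl).2)
  have hcc : t1.card + t2.card = (lns R P).card :=
    Finset.card_filter_add_card_filter_not _
  have hl0t2 : l0 ∈ t2 := by
    rw [ht2, Finset.mem_filter]
    exact ⟨hl0, by omega⟩
  have hb2 : t2.card * 2 < ∑ l ∈ t2, ((Tl R c l).erase P).card := by
    have h2 : ∀ l ∈ t2, 2 ≤ ((Tl R c l).erase P).card := by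
      intro l hl
      rw [ht2, Finset.mem_filter] at hl
      have h1 := Finset.card_pos.mpr (fib_nonempty hPP hc hP0 hl.1)
      omega
    calc t2.card * 2 = ∑ _l ∈ t2, 2 := by rw [Finset.sum_const, smul_eq_mul]
    _ < ∑ l ∈ t2, ((Tl R c l).erase P).card :=
        Finset.sum_lt_sum h2 ⟨l0, hl0t2, by omega⟩
  obtain ⟨q, hq⟩ : ∃ q, q = p^2 := ⟨_, rfl⟩
  rw [← hq] at hN hS
  omega

/-- existence of the (unique) third support point on the line `PQ` -/
lemma partner_exists (hS : (Sf c).card + 2*p = 2*p^2 + 4) {μ : ZMod p} (hμ : μ ≠ 0)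
    (hKμ : (Kf c μ).card + 1 = 2*p) {P : Pt} (hP : c P = -μ)
    {Q : Pt} (hQP : Q ≠ P) (hQ0 : c Q ≠ 0) (hQμ : c Q ≠ μ) :
    ∃ x, x ≠ P ∧ x ≠ Q ∧ c x = μ - c Q ∧ ∃ l, R P l ∧ Tl R c l = {P, Q, x} := by
  have hP0 : c P ≠ 0 := by rw [hP]; exact neg_ne_zero.mpr hμ
  have hPQ : P ≠ Q := Ne.symm hQP
  set l := lineOf hPP hPQ with hldef
  have hspec := lineOf_spec hPP hPQ
  have hl : l ∈ lns R P := mem_lns.mpr hspec.1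
  have hQf : Q ∈ (Tl R c l).erase P :=
    Finset.mem_erase.mpr ⟨hQP, mem_Tl.mpr ⟨hspec.2, hQ0⟩⟩
  have hPT : P ∈ Tl R c l := P_mem_Tl hPP hP0 hl
  have hcard2 : ((Tl R c l).erase P).card ≤ 2 := fib_le_two hPP hc hS hμ hKμ hP l hl
  have hcard1 : 1 ≤ ((Tl R c l).erase P).card := Finset.card_pos.mpr ⟨Q, hQf⟩
  have hTins : Tl R c l = insert P ((Tl R c l).erase P) := (Finset.insert_erase hPT).symm
  have hsum0 := line_sum hc l
  rcases (by omega : ((Tl R c l).erase P).card = 1 ∨ ((Tl R c l).erase P).card = 2)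
    with h1 | h2
  · exfalso
    obtain ⟨y, hy⟩ := Finset.card_eq_one.mp h1
    have hQy : Q = y := by
      have := hQf; rw [hy] at this; simpa using this
    rw [hTins, hy] at hsum0
    have hPy : P ∉ ({y} : Finset Pt) := by
      simp only [Finset.mem_singleton]
      rw [← hQy]; exact hPQ
    rw [Finset.sum_insert hPy, Finset.sum_singleton] at hsum0
    apply hQμ
    rw [hQy]
    rw [hP] at hsum0
    linear_combination hsum0
  · obtain ⟨u, v, huv, hset⟩ := Finset.card_eq_two.mp h2
    have hQuv : Q = u ∨ Q = v := by
      have := hQf; rw [hset] at this; simpa using this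
    obtain ⟨z, hzQ, hzset⟩ : ∃ z, z ≠ Q ∧ (Tl R c l).erase P = {Q, z} := by
      rcases hQuv with h | h
      · subst h; exact ⟨v, Ne.symm huv, hset⟩
      · subst h; exact ⟨u, huv, by rw [hset, Finset.pair_comm]⟩
    have hzmem : z ∈ (Tl R c l).erase P := by rw [hzset]; simp
    have hzP : z ≠ P := (Finset.mem_erase.mp hzmem).1
    have hz0 : c z ≠ 0 := (mem_Tl.mp (Finset.mem_erase.mp hzmem).2).2
    refine ⟨z, hzP, hzQ, ?_, l, hspec.1, ?_⟩
    · rw [hTins, hzset] at hsum0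
      have hPQz : P ∉ ({Q, z} : Finset Pt) := by
        simp only [Finset.mem_insert, Finset.mem_singleton]
        push_neg
        exact ⟨Ne.symm hQP, Ne.symm hzP⟩
      have hQz : Q ∉ ({z} : Finset Pt) := by simpa using Ne.symm hzQ

      rw [Finset.sum_insert hPQz, Finset.sum_insert hQz, Finset.sum_singleton] at hsum0
      rw [hP] at hsum0
      linear_combination hsum0
    · rw [hTins, hzset]

/-- abstract injection lemma via partner points -/
lemma inj_partner (hS : (Sf c).card + 2*p = 2*p^2 + 4) {μ : ZMod p} (hμ : μ ≠ 0)
    (hKμ : (Kf c μ).card + 1 = 2*p) {P : Pt} (hP : c P = -μ) (A B : Finset Pt)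
    (hA : ∀ Q ∈ A, Q ≠ P ∧ c Q ≠ 0 ∧ c Q ≠ μ)
    (hB : ∀ Q ∈ A, ∀ x, x ≠ P → x ≠ Q → c x = μ - c Q → x ∈ B) :
    A.card ≤ B.card := by
  have hex : ∀ Q ∈ A, ∃ x, x ≠ P ∧ x ≠ Q ∧ c x = μ - c Q ∧
      ∃ l, R P l ∧ Tl R c l = {P, Q, x} :=
    fun Q hQ => partner_exists hPP hc hS hμ hKμ hP (hA Q hQ).1 (hA Q hQ).2.1 (hA Q hQ).2.2
  apply Finset.card_le_card_of_injOn (fun Q => if h : ∃ x, x ≠ P ∧ x ≠ Q ∧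
      c x = μ - c Q ∧ ∃ l, R P l ∧ Tl R c l = {P, Q, x} then h.choose else P)
  · intro Q hQ
    have h := hex Q hQ
    simp only [dif_pos h]
    obtain ⟨hx1, hx2, hx3, -⟩ := h.choose_spec
    exact hB Q hQ _ hx1 hx2 hx3
  · intro Q1 hQ1 Q2 hQ2 heq
    simp only [Finset.mem_coe] at hQ1 hQ2
    have h1 := hex Q1 hQ1
    have h2 := hex Q2 hQ2
    simp only [dif_pos h1, dif_pos h2] at heq
    obtain ⟨h1P, h1Q, h1v, l1, hl1P, hl1T⟩ := h1.choose_spec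
    obtain ⟨h2P, h2Q, h2v, l2, hl2P, hl2T⟩ := h2.choose_spec
    set x := h2.choose with hxdef
    have hxl1 : R x l1 := by
      have hm : x ∈ Tl R c l1 := by
        rw [hl1T]
        simp only [Finset.mem_insert, Finset.mem_singleton]
        right; right; exact heq.symm
      exact (mem_Tl.mp hm).1
    have hxl2 : R x l2 := by
      have hm : x ∈ Tl R c l2 := by
        rw [hl2T]
        simp
      exact (mem_Tl.mp hm).1
    have hPx : P ≠ x := Ne.symm h2P
    have hll : l1 = l2 := line_unique hPP hPx ⟨hl1P, hxl1⟩ ⟨hl2P, hxl2⟩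
    have hQ2mem : Q2 ∈ Tl R c l1 := by
      rw [hll, hl2T]
      simp
    rw [hl1T] at hQ2mem
    simp only [Finset.mem_insert, Finset.mem_singleton] at hQ2mem
    rcases hQ2mem with h | h | h
    · exact absurd h (hA Q2 hQ2).1
    · exact h.symm
    · exact absurd (h.trans heq).symm h2Q

omit hPP hc in
lemma cast_nz (hp : p.Prime) {k : ℕ} (hk0 : 0 < k) (hkp : k < p) :
    ((k : ℕ) : ZMod p) ≠ 0 := by
  rw [Ne, ZMod.natCast_eq_zero_iff]
  intro hdvd
  have := Nat.le_of_dvd hk0 hdvd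
  omega

lemma L1' (hS : (Sf c).card + 2*p = 2*p^2 + 4) (hp5 : 5 ≤ p) {a : ZMod p} (ha : a ≠ 0)
    (hpos : 0 < (Kf c a).card) : 2*p ≤ (Kf c a).card + 1 := by
  have h1 := L1 hPP hc hS ha (Finset.card_pos.mp hpos)
  have h2 := L1 hPP hc hS (neg_ne_zero.mpr ha)
    (Finset.card_pos.mp (by omega))
  rwa [neg_neg] at h2

lemma Rel_le (hS : (Sf c).card + 2*p = 2*p^2 + 4) (hp5 : 5 ≤ p) {μ a : ZMod p} (hμ : μ ≠ 0)
    (hKμ : (Kf c μ).card + 1 = 2*p) (ha0 : a ≠ 0) (haμ : a ≠ μ) (hamμ : a ≠ -μ) :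
    (Kf c a).card ≤ (Kf c (μ - a)).card := by
  have hKne : (Kf c μ).Nonempty := Finset.card_pos.mp (by omega)
  have hL1 := L1 hPP hc hS hμ hKne
  have hPne : (Kf c (-μ)).Nonempty := Finset.card_pos.mp (by omega)
  obtain ⟨P, hPm⟩ := hPne
  have hP : c P = -μ := mem_Kf.mp hPm
  apply inj_partner hPP hc hS hμ hKμ hP
  · intro Q hQ
    have hQa : c Q = a := mem_Kf.mp hQ
    refine ⟨?_, by rw [hQa]; exact ha0, by rw [hQa]; exact haμ⟩
    intro h
    exact hamμ (by rw [← hQa, h, hP])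
  · intro Q hQ x _ _ hx
    rw [mem_Kf, hx, mem_Kf.mp hQ]

lemma Rel_eq (hS : (Sf c).card + 2*p = 2*p^2 + 4) (hp5 : 5 ≤ p) {μ a : ZMod p} (hμ : μ ≠ 0)
    (hKμ : (Kf c μ).card + 1 = 2*p) (ha0 : a ≠ 0) (haμ : a ≠ μ) (hamμ : a ≠ -μ)
    (ha2μ : a ≠ 2*μ) :
    (Kf c a).card = (Kf c (μ - a)).card := by
  refine le_antisymm (Rel_le hPP hc hS hp5 hμ hKμ ha0 haμ hamμ) ?_
  have h1 : μ - a ≠ 0 := sub_ne_zero.mpr (Ne.symm haμ)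
  have h2 : μ - a ≠ μ := fun h => ha0 (by linear_combination -h)
  have h3 : μ - a ≠ -μ := fun h => ha2μ (by linear_combination -h)
  have := Rel_le hPP hc hS hp5 hμ hKμ h1 h2 h3
  rwa [sub_sub_cancel] at this

lemma Rel_shift (hS : (Sf c).card + 2*p = 2*p^2 + 4) (hp : p.Prime) (hp5 : 5 ≤ p)
    {μ : ZMod p} (hμ : μ ≠ 0) (hKμ : (Kf c μ).card + 1 = 2*p) :
    (Kf c (-μ)).card = (Kf c (2*μ)).card + 1 := by
  haveI : Fact p.Prime := ⟨hp⟩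
  have h2 : (2 : ZMod p) ≠ 0 := by
    have := cast_nz (p := p) hp (k := 2) (by norm_num) (by omega)
    simpa using this
  have h3 : (3 : ZMod p) ≠ 0 := by
    have := cast_nz (p := p) hp (k := 3) (by norm_num) (by omega)
    simpa using this
  have h2μ : (2:ZMod p)*μ ≠ 0 := mul_ne_zero h2 hμ
  have h3μ : (3:ZMod p)*μ ≠ 0 := mul_ne_zero h3 hμ
  have hKne : (Kf c μ).Nonempty := Finset.card_pos.mp (by omega)
  have hL1 := L1 hPP hc hS hμ hKne
  have hPne : (Kf c (-μ)).Nonempty := Finset.card_pos.mp (by omega)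
  obtain ⟨P, hPm⟩ := hPne
  have hP : c P = -μ := mem_Kf.mp hPm
  have hdir1 : ((Kf c (-μ)).erase P).card ≤ (Kf c (2*μ)).card := by
    apply inj_partner hPP hc hS hμ hKμ hP
    · intro Q hQ
      rw [Finset.mem_erase] at hQ
      have hQv : c Q = -μ := mem_Kf.mp hQ.2
      refine ⟨hQ.1, by rw [hQv]; exact neg_ne_zero.mpr hμ, ?_⟩
      rw [hQv]
      intro h
      exact h2μ (by linear_combination -h)
    · intro Q hQ x _ _ hx
      rw [Finset.mem_erase] at hQ
      have hQv : c Q = -μ := mem_Kf.mp hQ.2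
      rw [mem_Kf, hx, hQv]
      ring
  have hdir2 : (Kf c (2*μ)).card ≤ ((Kf c (-μ)).erase P).card := by
    apply inj_partner hPP hc hS hμ hKμ hP
    · intro Q hQ
      have hQv : c Q = 2*μ := mem_Kf.mp hQ
      refine ⟨?_, by rw [hQv]; exact h2μ, by rw [hQv]; intro h; exact hμ (by linear_combination h)⟩
      intro h
      rw [h, hP] at hQv
      exact h3μ (by linear_combination -hQv)
    · intro Q hQ x hxP _ hx
      have hQv : c Q = 2*μ := mem_Kf.mp hQ
      rw [Finset.mem_erase]
      refine ⟨hxP, ?_⟩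
      rw [mem_Kf, hx, hQv]
      ring
  have hcc := Finset.card_erase_add_one hPm
  omega

omit hPP hc in
lemma sum_Kf [NeZero p] : ∑ a ∈ (univ.erase (0 : ZMod p)), (Kf c a).card = (Sf c).card := by
  have hmaps : ∀ x ∈ Sf c, c x ∈ univ.erase (0 : ZMod p) := fun x hx =>
    Finset.mem_erase.mpr ⟨mem_Sf.mp hx, Finset.mem_univ _⟩
  have hfib := Finset.card_eq_sum_card_fiberwise hmaps
  rw [hfib]
  apply Finset.sum_congr rfl
  intro a ha
  congr 1
  ext x
  simp only [Finset.mem_filter, mem_Sf, mem_Kf]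
  have ha0 : a ≠ 0 := (Finset.mem_erase.mp ha).1
  constructor
  · intro h; exact ⟨by rw [h]; exact ha0, h⟩
  · rintro ⟨-, h⟩; exact h

/-- the generic case: `ν ∉ {μ, -μ, 2μ}` and `μ ≠ 2ν` gives a contradiction -/
lemma Egen (hS : (Sf c).card + 2*p = 2*p^2 + 4) (hp : p.Prime) (hp5 : 5 ≤ p)
    {μ ν : ZMod p} (hμ0 : μ ≠ 0) (hν0 : ν ≠ 0)
    (hKμ : (Kf c μ).card + 1 = 2*p) (hKν : (Kf c ν).card + 1 = 2*p)
    (hμν : μ ≠ ν) (hνnμ : ν ≠ -μ) (hν2μ : ν ≠ 2*μ) (hμ2ν : μ ≠ 2*ν) : False := by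
  haveI : Fact p.Prime := ⟨hp⟩
  have h2 : (2 : ZMod p) ≠ 0 := by
    have := cast_nz (p := p) hp (k := 2) (by norm_num) (by omega)
    simpa using this
  have hlam0 : ν - μ ≠ 0 := sub_ne_zero.mpr (Ne.symm hμν)
  have hc1 : (Kf c μ).card ≤ (Kf c (ν - μ)).card := by
    refine Rel_le hPP hc hS hp5 hν0 hKν hμ0 hμν ?_
    intro h
    exact hνnμ (by linear_combination h)
  have hc2 : (Kf c (ν - μ)).card ≤ (Kf c μ).card := by
    have := Rel_le hPP hc hS hp5 hν0 hKν (a := ν - μ) hlam0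
      (fun h => hμ0 (by linear_combination -h))
      (fun h => hμ2ν (by linear_combination -h))
    rwa [sub_sub_cancel] at this
  have hKlam : (Kf c (ν - μ)).card + 1 = 2*p := by omega
  have hshift := Rel_shift hPP hc hS hp hp5 hlam0 hKlam
  have hL1lam := L1 hPP hc hS hlam0 (Finset.card_pos.mp (by omega))
  have h2lam0 : 2*(ν - μ) ≠ 0 := mul_ne_zero h2 hlam0
  have hL3 := L1' hPP hc hS hp5 h2lam0 (by omega)
  have hc3 : (Kf c (μ - ν)).card ≤ (Kf c ν).card := by
    have := Rel_le hPP hc hS hp5 hμ0 hKμ (a := μ - ν) (sub_ne_zero.mpr hμν)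
      (fun h => hν0 (by linear_combination -h))
      (fun h => hν2μ (by linear_combination -h))
    rwa [sub_sub_cancel] at this
  have hneg : μ - ν = -(ν - μ) := by ring
  rw [hneg] at hc3
  omega

/-- the case `ν = 2μ` -/
lemma Ecase2 (hS : (Sf c).card + 2*p = 2*p^2 + 4) (hp : p.Prime) (hp5 : 5 ≤ p)
    {μ : ZMod p} (hμ0 : μ ≠ 0) (hKμ : (Kf c μ).card + 1 = 2*p)
    (hK2μ : (Kf c (2*μ)).card + 1 = 2*p) : False := by
  have h5eq : (5 : ZMod 5) = 0 := by decide
  have n12 : (1:ZMod 5) ≠ 2 := by decide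
  have n13 : (1:ZMod 5) ≠ 3 := by decide
  have n14 : (1:ZMod 5) ≠ 4 := by decide
  have n23 : (2:ZMod 5) ≠ 3 := by decide
  have n24 : (2:ZMod 5) ≠ 4 := by decide
  have n34 : (3:ZMod 5) ≠ 4 := by decide
  have z2 : (2:ZMod 5) ≠ 0 := by decide
  have z3 : (3:ZMod 5) ≠ 0 := by decide
  have z4 : (4:ZMod 5) ≠ 0 := by decide
  have h7eq : (7 : ZMod 7) = 0 := by decide
  have m12 : (1:ZMod 7) ≠ 2 := by decide
  have m13 : (1:ZMod 7) ≠ 3 := by decide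
  have m14 : (1:ZMod 7) ≠ 4 := by decide
  have m15 : (1:ZMod 7) ≠ 5 := by decide
  have m16 : (1:ZMod 7) ≠ 6 := by decide
  have m23 : (2:ZMod 7) ≠ 3 := by decide
  have m24 : (2:ZMod 7) ≠ 4 := by decide
  have m25 : (2:ZMod 7) ≠ 5 := by decide
  have m26 : (2:ZMod 7) ≠ 6 := by decide
  have m34 : (3:ZMod 7) ≠ 4 := by decide
  have m35 : (3:ZMod 7) ≠ 5 := by decide
  have m36 : (3:ZMod 7) ≠ 6 := by decide
  have m45 : (4:ZMod 7) ≠ 5 := by decide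
  have m46 : (4:ZMod 7) ≠ 6 := by decide
  have m56 : (5:ZMod 7) ≠ 6 := by decide
  have w2 : (2:ZMod 7) ≠ 0 := by decide
  have w3 : (3:ZMod 7) ≠ 0 := by decide
  have w4 : (4:ZMod 7) ≠ 0 := by decide
  have w5 : (5:ZMod 7) ≠ 0 := by decide
  have w6 : (6:ZMod 7) ≠ 0 := by decide
  haveI : Fact p.Prime := ⟨hp⟩
  have h2 : (2 : ZMod p) ≠ 0 := by
    have := cast_nz (p := p) hp (k := 2) (by norm_num) (by omega); simpa using this
  have h3 : (3 : ZMod p) ≠ 0 := by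
    have := cast_nz (p := p) hp (k := 3) (by norm_num) (by omega); simpa using this
  have h4 : (4 : ZMod p) ≠ 0 := by
    have := cast_nz (p := p) hp (k := 4) (by norm_num) (by omega); simpa using this
  have h2μ0 : 2*μ ≠ 0 := mul_ne_zero h2 hμ0
  have hsh1 := Rel_shift hPP hc hS hp hp5 hμ0 hKμ
  have hsh2 := Rel_shift hPP hc hS hp hp5 h2μ0 hK2μ
  rw [show (2:ZMod p)*(2*μ) = 4*μ from by ring] at hsh2
  by_cases hp5' : p = 5
  · subst hp5'
    have e1 : (-μ : ZMod 5) = 4*μ := by linear_combination (-μ) * h5eq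
    have e2 : (-(2*μ) : ZMod 5) = 3*μ := by linear_combination (-μ) * h5eq
    rw [e1] at hsh1
    rw [e2] at hsh2
    have hd : ∀ a b : ZMod 5, a ≠ b → a*μ ≠ b*μ :=
      fun a b hab h => hab (mul_right_cancel₀ hμ0 h)
    have d12 : μ ≠ 2*μ := by have := hd 1 2 n12; rwa [one_mul] at this
    have d13 : μ ≠ 3*μ := by have := hd 1 3 n13; rwa [one_mul] at this
    have d14 : μ ≠ 4*μ := by have := hd 1 4 n14; rwa [one_mul] at this
    have d23 : (2:ZMod 5)*μ ≠ 3*μ := hd 2 3 n23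
    have d24 : (2:ZMod 5)*μ ≠ 4*μ := hd 2 4 n24
    have d34 : (3:ZMod 5)*μ ≠ 4*μ := hd 3 4 n34
    have hset : univ.erase (0 : ZMod 5) = {μ, 2*μ, 3*μ, 4*μ} := by
      apply (Finset.eq_of_subset_of_card_le ?_ ?_).symm
      · intro x hx
        simp only [Finset.mem_insert, Finset.mem_singleton] at hx
        rcases hx with h|h|h|h <;> subst h <;>
          refine Finset.mem_erase.mpr ⟨?_, Finset.mem_univ _⟩ <;>
          first
            | exact hμ0
            | exact mul_ne_zero z2 hμ0
            | exact mul_ne_zero z3 hμ0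
            | exact mul_ne_zero z4 hμ0
      · have hc4 : ({μ, 2*μ, 3*μ, 4*μ} : Finset (ZMod 5)).card = 4 := by
          rw [Finset.card_insert_of_notMem (by
              simp only [Finset.mem_insert, Finset.mem_singleton]; push_neg
              exact ⟨d12, d13, d14⟩),
            Finset.card_insert_of_notMem (by
              simp only [Finset.mem_insert, Finset.mem_singleton]; push_neg
              exact ⟨d23, d24⟩),
            Finset.card_insert_of_notMem (by
              simp only [Finset.mem_singleton]; exact d34),
            Finset.card_singleton]
        rw [hc4, Finset.card_erase_of_mem (Finset.mem_univ _), Finset.card_univ, ZMod.card]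
    have hsum := sum_Kf (p := 5) (c := c)
    rw [hset, Finset.sum_insert (by
        simp only [Finset.mem_insert, Finset.mem_singleton]; push_neg
        exact ⟨d12, d13, d14⟩),
      Finset.sum_insert (by
        simp only [Finset.mem_insert, Finset.mem_singleton]; push_neg
        exact ⟨d23, d24⟩),
      Finset.sum_insert (by
        simp only [Finset.mem_singleton]; exact d34),
      Finset.sum_singleton] at hsum
    norm_num at hS
    omega
  · have h5 : (5 : ZMod p) ≠ 0 := by
      have h5' : ((5:ℕ) : ZMod p) ≠ 0 := by
        rw [Ne, ZMod.natCast_eq_zero_iff]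
        intro hdvd
        exact hp5' ((Nat.prime_dvd_prime_iff_eq hp (by norm_num)).mp hdvd)
      simpa using h5'
    have ha1 : (Kf c (-μ)).card ≤ (Kf c (3*μ)).card := by
      have := Rel_le hPP hc hS hp5 h2μ0 hK2μ (a := -μ) (neg_ne_zero.mpr hμ0)
        (by intro h; exact mul_ne_zero h3 hμ0 (by linear_combination -h))
        (by intro h; exact hμ0 (by linear_combination h))
      rwa [show (2:ZMod p)*μ - (-μ) = 3*μ from by ring] at this
    have ha2 : (Kf c (3*μ)).card ≤ (Kf c (-(2*μ))).card := by
      have := Rel_le hPP hc hS hp5 hμ0 hKμ (a := 3*μ) (mul_ne_zero h3 hμ0)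
        (by intro h; exact mul_ne_zero h2 hμ0 (by linear_combination h))
        (by intro h; exact mul_ne_zero h4 hμ0 (by linear_combination h))
      rwa [show μ - 3*μ = -(2*μ) from by ring] at this
    have ha3 : (Kf c (-(2*μ))).card ≤ (Kf c (3*μ)).card := by
      have := Rel_le hPP hc hS hp5 hμ0 hKμ (a := -(2*μ)) (neg_ne_zero.mpr h2μ0)
        (by intro h; exact mul_ne_zero h3 hμ0 (by linear_combination -h))
        (by intro h; exact hμ0 (by linear_combination -h))
      rwa [show μ - -(2*μ) = 3*μ from by ring] at this
    have ha4 : (Kf c (3*μ)).card ≤ (Kf c (-μ)).card := by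
      have := Rel_le hPP hc hS hp5 h2μ0 hK2μ (a := 3*μ) (mul_ne_zero h3 hμ0)
        (by intro h; exact hμ0 (by linear_combination h))
        (by intro h; exact mul_ne_zero h5 hμ0 (by linear_combination h))
      rwa [show (2:ZMod p)*μ - 3*μ = -μ from by ring] at this
    have hK4μ : (Kf c (4*μ)).card + 1 = 2*p := by omega
    by_cases hp7 : p = 7
    · subst hp7
      have e1 : (-μ : ZMod 7) = 6*μ := by linear_combination (-μ) * h7eq
      have e2 : (-(2*μ) : ZMod 7) = 5*μ := by linear_combination (-μ) * h7eq
      rw [e1] at hsh1 ha1 ha4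
      rw [e2] at hsh2 ha2 ha3
      have hd : ∀ a b : ZMod 7, a ≠ b → a*μ ≠ b*μ :=
        fun a b hab h => hab (mul_right_cancel₀ hμ0 h)
      have hd1 : ∀ b : ZMod 7, (1:ZMod 7) ≠ b → μ ≠ b*μ :=
        fun b hb h => hd 1 b hb (by rwa [one_mul])
      have hset : univ.erase (0 : ZMod 7) = {μ, 2*μ, 3*μ, 4*μ, 5*μ, 6*μ} := by
        apply (Finset.eq_of_subset_of_card_le ?_ ?_).symm
        · intro x hx
          simp only [Finset.mem_insert, Finset.mem_singleton] at hx
          rcases hx with h|h|h|h|h|h <;> subst h <;>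
            refine Finset.mem_erase.mpr ⟨?_, Finset.mem_univ _⟩ <;>
            first
              | exact hμ0
              | exact mul_ne_zero w2 hμ0
              | exact mul_ne_zero w3 hμ0
              | exact mul_ne_zero w4 hμ0
              | exact mul_ne_zero w5 hμ0
              | exact mul_ne_zero w6 hμ0
        · have hc6 : ({μ, 2*μ, 3*μ, 4*μ, 5*μ, 6*μ} : Finset (ZMod 7)).card = 6 := by
            rw [Finset.card_insert_of_notMem (by
                simp only [Finset.mem_insert, Finset.mem_singleton]; push_neg
                exact ⟨hd1 2 m12, hd1 3 m13, hd1 4 m14,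
                  hd1 5 m15, hd1 6 m16⟩),
              Finset.card_insert_of_notMem (by
                simp only [Finset.mem_insert, Finset.mem_singleton]; push_neg
                exact ⟨hd 2 3 m23, hd 2 4 m24, hd 2 5 m25,
                  hd 2 6 m26⟩),
              Finset.card_insert_of_notMem (by
                simp only [Finset.mem_insert, Finset.mem_singleton]; push_neg
                exact ⟨hd 3 4 m34, hd 3 5 m35, hd 3 6 m36⟩),
              Finset.card_insert_of_notMem (by
                simp only [Finset.mem_insert, Finset.mem_singleton]; push_neg
                exact ⟨hd 4 5 m45, hd 4 6 m46⟩),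
              Finset.card_insert_of_notMem (by
                simp only [Finset.mem_singleton]; exact hd 5 6 m56),
              Finset.card_singleton]
          rw [hc6, Finset.card_erase_of_mem (Finset.mem_univ _), Finset.card_univ, ZMod.card]
      have hsum := sum_Kf (p := 7) (c := c)
      rw [hset, Finset.sum_insert (by
          simp only [Finset.mem_insert, Finset.mem_singleton]; push_neg
          exact ⟨hd1 2 m12, hd1 3 m13, hd1 4 m14,
            hd1 5 m15, hd1 6 m16⟩),
        Finset.sum_insert (by
          simp only [Finset.mem_insert, Finset.mem_singleton]; push_neg
          exact ⟨hd 2 3 m23, hd 2 4 m24, hd 2 5 m25,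
            hd 2 6 m26⟩),
        Finset.sum_insert (by
          simp only [Finset.mem_insert, Finset.mem_singleton]; push_neg
          exact ⟨hd 3 4 m34, hd 3 5 m35, hd 3 6 m36⟩),
        Finset.sum_insert (by
          simp only [Finset.mem_insert, Finset.mem_singleton]; push_neg
          exact ⟨hd 4 5 m45, hd 4 6 m46⟩),
        Finset.sum_insert (by
          simp only [Finset.mem_singleton]; exact hd 5 6 m56),
        Finset.sum_singleton] at hsum
      norm_num at hS
      omega
    · have h7 : (7 : ZMod p) ≠ 0 := by
        have h7' : ((7:ℕ) : ZMod p) ≠ 0 := by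
          rw [Ne, ZMod.natCast_eq_zero_iff]
          intro hdvd
          exact hp7 ((Nat.prime_dvd_prime_iff_eq hp (by norm_num)).mp hdvd)
        simpa using h7'
      exact Egen hPP hc hS hp hp5 hμ0 (mul_ne_zero h4 hμ0) hKμ hK4μ
        (by intro h; exact mul_ne_zero h3 hμ0 (by linear_combination -h))
        (by intro h; exact mul_ne_zero h5 hμ0 (by linear_combination h))
        (by intro h; exact mul_ne_zero h2 hμ0 (by linear_combination h))
        (by intro h; exact mul_ne_zero h7 hμ0 (by linear_combination -h))

/-- two distinct special colours give a contradiction -/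
lemma main_contra (hS : (Sf c).card + 2*p = 2*p^2 + 4) (hp : p.Prime) (hp5 : 5 ≤ p)
    {μ ν : ZMod p} (hμ0 : μ ≠ 0) (hν0 : ν ≠ 0)
    (hKμ : (Kf c μ).card + 1 = 2*p) (hKν : (Kf c ν).card + 1 = 2*p)
    (hμν : μ ≠ ν) : False := by
  haveI : Fact p.Prime := ⟨hp⟩
  have h2 : (2 : ZMod p) ≠ 0 := by
    have := cast_nz (p := p) hp (k := 2) (by norm_num) (by omega); simpa using this
  by_cases h1 : ν = -μ
  · have hsh := Rel_shift hPP hc hS hp hp5 hμ0 hKμ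
    rw [h1] at hKν
    have h2μ0 : 2*μ ≠ 0 := mul_ne_zero h2 hμ0
    have hL := L1' hPP hc hS hp5 h2μ0 (by omega)
    omega
  by_cases h2' : ν = 2*μ
  · rw [h2'] at hKν
    exact Ecase2 hPP hc hS hp hp5 hμ0 hKμ hKν
  by_cases h3' : μ = 2*ν
  · rw [h3'] at hKμ
    exact Ecase2 hPP hc hS hp hp5 hν0 hKν hKμ
  exact Egen hPP hc hS hp hp5 hμ0 hν0 hKμ hKν hμν h1 h2' h3'

end Fiber

end AtMostOneAux

/-- For `ε = 2`, at most one colour `μ` satisfies `|K_μ| = 2p - 1`. -/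
theorem at_most_one_colour_card_eq {Pt Ln : Type} [Finite Pt] [Finite Ln]
    (p : ℕ) (hp : p.Prime) (hp5 : 5 ≤ p)
    (R : Pt → Ln → Prop) (hPP : IsProjectivePlaneOrder (p ^ 2) R)
    (c : Pt → ZMod p) (hc : IsDualCodeWord p R c)
    (hw : (Function.support c).ncard = 2 * p ^ 2 - 2 * p + 4) :
    ({μ : ZMod p | μ ≠ 0 ∧ ({x | c x = μ} : Set Pt).ncard = 2 * p - 1}).Subsingleton := by
  letI := Fintype.ofFinite Pt
  letI := Fintype.ofFinite Ln
  intro μ hμ ν hν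
  simp only [Set.mem_setOf_eq] at hμ hν
  by_contra hne
  have hS := AtMostOneAux.Sf_arith hPP hc hp5 hw
  have hKμ : (AtMostOneAux.Kf c μ).card + 1 = 2*p := by
    have h1 := hμ.2
    rw [Set.ncard_eq_toFinset_card', Set.toFinset_setOf] at h1
    have h2 : (AtMostOneAux.Kf c μ).card = 2*p - 1 := h1
    omega
  have hKν : (AtMostOneAux.Kf c ν).card + 1 = 2*p := by
    have h1 := hν.2
    rw [Set.ncard_eq_toFinset_card', Set.toFinset_setOf] at h1
    have h2 : (AtMostOneAux.Kf c ν).card = 2*p - 1 := h1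
    omega
  exact AtMostOneAux.main_contra hPP hc hS hp hp5 hμ.1 hν.1 hKμ hKν hne
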